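/- Let B be a d×d real matrix with B^T + B ≤ 0, and V = {x : ‖e^{tB}x‖ = ‖x‖ for all t ∈ R}. Then the orthogonal complement V^⊥ of V is invariant under B. -/

import Mathlib

open Matrix

/-- The Euclidean norm on `ℝ^d`. -/
noncomputable def eNorm {d : ℕ} (x : Fin d → ℝ) : ℝ := Real.sqrt (x ⬝ᵥ x)

section Aux

variable {d : ℕ}

/-- Derivative of the flow `s ↦ e^{sB} y`. -/
lemma hasDerivAt_expFlow (B : Matrix (Fin d) (Fin d) ℝ) (y : Fin d → ℝ) (t : ℝ) :
    HasDerivAt (fun s : ℝ => (NormedSpace.exp (s • B)) *ᵥ y)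
      (B *ᵥ ((NormedSpace.exp (t • B)) *ᵥ y)) t := by
  letI : SeminormedRing (Matrix (Fin d) (Fin d) ℝ) := Matrix.linftyOpSemiNormedRing
  letI : NormedRing (Matrix (Fin d) (Fin d) ℝ) := Matrix.linftyOpNormedRing
  letI : NormedAlgebra ℝ (Matrix (Fin d) (Fin d) ℝ) := Matrix.linftyOpNormedAlgebra
  have h := hasDerivAt_exp_smul_const' (𝕂 := ℝ) B t
  let L : Matrix (Fin d) (Fin d) ℝ →ₗ[ℝ] (Fin d → ℝ) :=
    { toFun := fun A => A *ᵥ y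
      map_add' := fun A C => Matrix.add_mulVec A C y
      map_smul' := fun c A => Matrix.smul_mulVec c A y }
  have hc := (LinearMap.toContinuousLinearMap L).hasFDerivAt.comp_hasDerivAt t h
  have hc' : HasDerivAt (fun s : ℝ => (NormedSpace.exp (s • B)) *ᵥ y)
      ((B * NormedSpace.exp (t • B)) *ᵥ y) t := hc
  simpa [Matrix.mulVec_mulVec] using hc'

/-- Differentiating `s ↦ M *ᵥ w s`. -/
lemma hasDerivAt_mulVec_comp (M : Matrix (Fin d) (Fin d) ℝ) {w : ℝ → Fin d → ℝ}
    {w' : Fin d → ℝ} {t : ℝ} (hw : HasDerivAt w w' t) :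
    HasDerivAt (fun s => M *ᵥ (w s)) (M *ᵥ w') t := by
  have hc := (LinearMap.toContinuousLinearMap (Matrix.mulVecLin M)).hasFDerivAt.comp_hasDerivAt
    t hw
  simpa [Function.comp_def] using hc

/-- Differentiating `s ↦ w s ⬝ᵥ w s`. -/
lemma hasDerivAt_dotSelf {w : ℝ → Fin d → ℝ} {w' : Fin d → ℝ} {t : ℝ}
    (hw : HasDerivAt w w' t) :
    HasDerivAt (fun s => w s ⬝ᵥ w s) (w' ⬝ᵥ w t + w t ⬝ᵥ w') t := by
  have hi : ∀ i, HasDerivAt (fun s => w s i) (w' i) t := fun i => hasDerivAt_pi.mp hw i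
  have hsum : HasDerivAt (fun s => ∑ i, w s i * w s i)
      (∑ i : Fin d, (w' i * w t i + w t i * w' i)) t :=
    HasDerivAt.fun_sum fun i _ => (hi i).mul (hi i)
  simpa [dotProduct, Finset.sum_add_distrib] using hsum

/-- If `M` is symmetric negative semidefinite and `z ⬝ᵥ M z = 0`, then `M z = 0`. -/
lemma neg_semidef_kernel (M : Matrix (Fin d) (Fin d) ℝ) (hM : Mᵀ = M)
    (h : ∀ x : Fin d → ℝ, x ⬝ᵥ M *ᵥ x ≤ 0) {z : Fin d → ℝ}
    (hz : z ⬝ᵥ M *ᵥ z = 0) : M *ᵥ z = 0 := by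
  have key : ∀ w : Fin d → ℝ, w ⬝ᵥ M *ᵥ z = 0 := by
    intro w
    set a := w ⬝ᵥ M *ᵥ z with ha
    set b := w ⬝ᵥ M *ᵥ w with hbdef
    have hb : b ≤ 0 := h w
    have hsymm : z ⬝ᵥ M *ᵥ w = a := by
      rw [ha, Matrix.dotProduct_mulVec, ← Matrix.mulVec_transpose, hM, dotProduct_comm]
    have hq : ∀ s : ℝ, 2 * s * a + s ^ 2 * b ≤ 0 := by
      intro s
      have hh := h (z + s • w)
      simp only [Matrix.mulVec_add, Matrix.mulVec_smul, dotProduct_add,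
        add_dotProduct, smul_dotProduct, dotProduct_smul,
        smul_eq_mul] at hh
      rw [hsymm, ← ha, ← hbdef] at hh
      nlinarith [hh]
    have hc : (0:ℝ) < 1 - b := by linarith
    set s := a / (1 - b) with hsdef
    have hsa : a = s * (1 - b) := by
      rw [hsdef]; field_simp
    have hs := hq s
    rw [hsa] at hs
    have hs2 : s ^ 2 ≤ 0 := by
      nlinarith [mul_nonneg (sq_nonneg s) (neg_nonneg.mpr hb)]
    have hs0 : s = 0 :=
      pow_eq_zero_iff (two_ne_zero) |>.mp (le_antisymm hs2 (sq_nonneg s))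
    rw [hsa, hs0, zero_mul]
  funext i
  have := key (Pi.single i 1)
  simpa [single_dotProduct] using this

lemma mulVec_dot_self (B : Matrix (Fin d) (Fin d) ℝ) (w : Fin d → ℝ) :
    (B *ᵥ w) ⬝ᵥ w = w ⬝ᵥ (Bᵀ *ᵥ w) := by
  rw [Matrix.dotProduct_mulVec, Matrix.vecMul_transpose]

end Aux

/-- The orthogonal complement of `V = {x : ‖e^{tB}x‖ = ‖x‖ ∀ t}` is invariant under `B`:
if `x` is orthogonal to every element of `V`, so is `Bx`. -/
theorem orthogonal_complement_invariant {d : ℕ} (B : Matrix (Fin d) (Fin d) ℝ)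
    (hB : ∀ x : Fin d → ℝ, x ⬝ᵥ ((Bᵀ + B).mulVec x) ≤ 0)
    (V : Set (Fin d → ℝ))
    (hV : V = {x | ∀ t : ℝ, eNorm ((NormedSpace.exp (t • B)).mulVec x) = eNorm x}) :
    ∀ x : Fin d → ℝ, (∀ y ∈ V, x ⬝ᵥ y = 0) → ∀ y ∈ V, (B.mulVec x) ⬝ᵥ y = 0 := by
  set M : Matrix (Fin d) (Fin d) ℝ := Bᵀ + B with hMdef
  have hMsymm : Mᵀ = M := by
    rw [hMdef, Matrix.transpose_add, Matrix.transpose_transpose, add_comm]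
  have dot_nonneg : ∀ v : Fin d → ℝ, 0 ≤ v ⬝ᵥ v := fun v =>
    Finset.sum_nonneg fun i _ => mul_self_nonneg (v i)
  -- Step A : for y ∈ V, M (e^{sB} y) = 0 for all s
  have stepA : ∀ y ∈ V, ∀ s : ℝ, M *ᵥ ((NormedSpace.exp (s • B)) *ᵥ y) = 0 := by
    intro y hy s
    set u : ℝ → Fin d → ℝ := fun r => (NormedSpace.exp (r • B)) *ᵥ y with hu
    have hconst : ∀ r, u r ⬝ᵥ u r = y ⬝ᵥ y := by
      intro r
      have hnorm : eNorm (u r) = eNorm y := by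
        rw [hV] at hy; exact hy r
      have h1 : Real.sqrt (u r ⬝ᵥ u r) = Real.sqrt (y ⬝ᵥ y) := hnorm
      calc u r ⬝ᵥ u r = Real.sqrt (u r ⬝ᵥ u r) ^ 2 := (Real.sq_sqrt (dot_nonneg _)).symm
        _ = Real.sqrt (y ⬝ᵥ y) ^ 2 := by rw [h1]
        _ = y ⬝ᵥ y := Real.sq_sqrt (dot_nonneg _)
    have hderiv : HasDerivAt (fun r => u r ⬝ᵥ u r)
        ((B *ᵥ u s) ⬝ᵥ u s + u s ⬝ᵥ (B *ᵥ u s)) s :=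
      hasDerivAt_dotSelf (hasDerivAt_expFlow B y s)
    have heq : (fun r => u r ⬝ᵥ u r) = fun _ => y ⬝ᵥ y := funext hconst
    rw [heq] at hderiv
    have hzero : (B *ᵥ u s) ⬝ᵥ u s + u s ⬝ᵥ (B *ᵥ u s) = 0 :=
      hderiv.unique (hasDerivAt_const s _)
    have hzz : u s ⬝ᵥ M *ᵥ u s = 0 := by
      have h1 : (B *ᵥ u s) ⬝ᵥ u s = u s ⬝ᵥ (Bᵀ *ᵥ u s) := mulVec_dot_self B (u s)
      rw [hMdef, Matrix.add_mulVec, dotProduct_add, ← h1]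
      linarith [hzero]
    exact neg_semidef_kernel M hMsymm hB hzz
  -- Step B : V is invariant under B
  have stepB : ∀ y ∈ V, B *ᵥ y ∈ V := by
    intro y hy
    set v : ℝ → Fin d → ℝ := fun r => (NormedSpace.exp (r • B)) *ᵥ (B *ᵥ y) with hvdef
    have hvu : ∀ r, v r = B *ᵥ ((NormedSpace.exp (r • B)) *ᵥ y) := by
      intro r
      have hcomm : Commute (NormedSpace.exp (r • B)) B :=
        (((Commute.refl B).smul_left r).exp_left)
      rw [hvdef]
      simp only [Matrix.mulVec_mulVec]
      rw [hcomm.eq]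
    -- M (v r) = 0 for all r, by differentiating r ↦ M (e^{rB} y) ≡ 0
    have hMv : ∀ r, M *ᵥ (v r) = 0 := by
      intro r
      have hg : HasDerivAt (fun s => M *ᵥ ((NormedSpace.exp (s • B)) *ᵥ y))
          (M *ᵥ (B *ᵥ ((NormedSpace.exp (r • B)) *ᵥ y))) r :=
        hasDerivAt_mulVec_comp M (hasDerivAt_expFlow B y r)
      have heq : (fun s => M *ᵥ ((NormedSpace.exp (s • B)) *ᵥ y)) = fun _ => (0 : Fin d → ℝ) :=
        funext (stepA y hy)
      rw [heq] at hg
      have := hg.unique (hasDerivAt_const r _)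
      rw [hvu r, this]
    -- hence r ↦ ‖v r‖² is constant
    have hdot : ∀ r : ℝ, v r ⬝ᵥ v r = v 0 ⬝ᵥ v 0 := by
      intro r
      have hdiff : ∀ s : ℝ, HasDerivAt (fun p => v p ⬝ᵥ v p) 0 s := by
        intro s
        have hds := hasDerivAt_dotSelf (hasDerivAt_expFlow B (B *ᵥ y) s)
        have h1 : (B *ᵥ v s) ⬝ᵥ v s + v s ⬝ᵥ (B *ᵥ v s) = 0 := by
          have h2 : (B *ᵥ v s) ⬝ᵥ v s = v s ⬝ᵥ (Bᵀ *ᵥ v s) := mulVec_dot_self B (v s)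
          have h3 : v s ⬝ᵥ M *ᵥ v s = 0 := by rw [hMv s]; simp
          rw [hMdef, Matrix.add_mulVec, dotProduct_add, ← h2] at h3
          linarith
        rw [← h1]
        exact hds
      exact is_const_of_deriv_eq_zero
        (fun s => (hdiff s).differentiableAt)
        (fun s => (hdiff s).deriv) r 0
    have hv0 : v 0 = B *ᵥ y := by
      rw [hvdef]; simp [NormedSpace.exp_zero, Matrix.one_mulVec]
    rw [hV]
    intro t
    show eNorm ((NormedSpace.exp (t • B)) *ᵥ (B *ᵥ y)) = eNorm (B *ᵥ y)
    have := hdot t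
    rw [hv0] at this
    unfold eNorm
    rw [show (NormedSpace.exp (t • B)) *ᵥ (B *ᵥ y) = v t from rfl, this]
  -- conclusion
  intro x hx y hy
  have hMy : M *ᵥ y = 0 := by
    have := stepA y hy 0
    simpa [NormedSpace.exp_zero, Matrix.one_mulVec] using this
  have hBt : Bᵀ *ᵥ y = -(B *ᵥ y) := by
    have : (Bᵀ + B) *ᵥ y = 0 := hMy
    rw [Matrix.add_mulVec] at this
    linear_combination (norm := (funext i; simp; ring_nf)) this - hMy + hMy
  have h1 : (B *ᵥ x) ⬝ᵥ y = x ⬝ᵥ (Bᵀ *ᵥ y) := by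
    rw [dotProduct_comm, Matrix.dotProduct_mulVec, ← Matrix.mulVec_transpose,
      dotProduct_comm]
  rw [h1, hBt, dotProduct_neg, hx (B *ᵥ y) (stepB y hy), neg_zero]
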